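/- Let Ω be a finite set of odd size n ≥ 3 and let ω ∈ Ω. Then the hypergraph H_ω = {{ω}} ∪ {A ⊆ Ω∖{ω} : |A| = 2} is a domination hypergraph: indeed, if G' is any graph realizing U_{2,Ω∖{ω}} (obtained from K_{Ω∖{ω}} by deleting a perfect matching), then the join G = K_{{ω}} ∨ G' satisfies D(G) = H_ω. -/

import Mathlib

def IsDominating {V : Type*} (G : SimpleGraph V) (D : Set V) : Prop :=
  ∀ v ∉ D, ∃ u ∈ D, G.Adj u v

def IsMinDominating {V : Type*} (G : SimpleGraph V) (D : Set V) : Prop :=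
  IsDominating G D ∧ ∀ D' ⊂ D, ¬ IsDominating G D'

/-- Let `Ω` be of odd size `n ≥ 3` and `ω ∈ Ω`. The hypergraph
`H_ω = {{ω}} ∪ {A ⊆ Ω∖{ω} : |A| = 2}` is a domination hypergraph: indeed, if `G'` is any
graph on `Ω∖{ω}` realizing `U_{2,Ω∖{ω}}`, then the join `G = K_{{ω}} ∨ G'` satisfies
`D(G) = H_ω`. -/
theorem join_realizes_Homega {V : Type*} [Fintype V]
    (hodd : Odd (Fintype.card V)) (hn : 3 ≤ Fintype.card V) (w : V)
    (G' : SimpleGraph {x : V // x ≠ w})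
    (hG' : {D : Set {x : V // x ≠ w} | IsMinDominating G' D}
        = {A : Set {x : V // x ≠ w} | A.ncard = 2})
    (Gj : SimpleGraph V)
    (hGj : ∀ x y : V, Gj.Adj x y ↔ x ≠ y ∧ (x = w ∨ y = w ∨
        ∃ (hx : x ≠ w) (hy : y ≠ w), G'.Adj ⟨x, hx⟩ ⟨y, hy⟩)) :
    {D : Set V | IsMinDominating Gj D}
        = {({w} : Set V)} ∪ {A : Set V | w ∉ A ∧ A.ncard = 2} ∧
    ∃ G : SimpleGraph V, {D : Set V | IsMinDominating G D}
        = {({w} : Set V)} ∪ {A : Set V | w ∉ A ∧ A.ncard = 2} := by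
  have hne : ∃ v : V, v ≠ w := by
    have h1 : 1 < Fintype.card V := by omega
    exact Fintype.exists_ne_of_one_lt_card h1 w
  have hempty : ¬ IsDominating Gj (∅ : Set V) := by
    intro h
    obtain ⟨u, hu, -⟩ := h w (by simp)
    exact hu
  have hemptyG' : ¬ IsDominating G' (∅ : Set {x : V // x ≠ w}) := by
    intro h
    obtain ⟨v, hv⟩ := hne
    obtain ⟨u, hu, -⟩ := h ⟨v, hv⟩ (by simp)
    exact hu
  have hwdom : ∀ D : Set V, w ∈ D → IsDominating Gj D := by
    intro D hwD v hv
    refine ⟨w, hwD, ?_⟩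
    rw [hGj]
    exact ⟨fun h => hv (h ▸ hwD), Or.inl rfl⟩
  -- key: image under val of preimage equals D when w ∉ D
  have himg : ∀ D : Set V, w ∉ D → (Subtype.val : {x : V // x ≠ w} → V) '' (Subtype.val ⁻¹' D) = D := by
    intro D hwD
    apply Set.image_preimage_eq_of_subset
    intro x hx
    exact ⟨⟨x, fun h => hwD (h ▸ hx)⟩, rfl⟩
  have htrans : ∀ D : Set V, w ∉ D → D.Nonempty →
      (IsDominating Gj D ↔ IsDominating G' ((Subtype.val : {x : V // x ≠ w} → V) ⁻¹' D)) := by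
    intro D hwD hDne
    constructor
    · intro h v hv
      obtain ⟨u, huD, hadj⟩ := h v.1 hv
      rw [hGj] at hadj
      obtain ⟨hne', h'⟩ := hadj
      have hu : u ≠ w := fun h => hwD (h ▸ huD)
      rcases h' with h | h | ⟨hx, hy, hadj⟩
      · exact absurd h hu
      · exact absurd h v.2
      · refine ⟨⟨u, hx⟩, huD, ?_⟩
        convert hadj using 1
    · intro h v hv
      by_cases hvw : v = w
      · obtain ⟨u, huD⟩ := hDne
        refine ⟨u, huD, ?_⟩
        rw [hGj]
        exact ⟨fun he => hwD (hvw ▸ he ▸ huD), Or.inr (Or.inl hvw)⟩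
      · obtain ⟨u, huS, hadj⟩ := h ⟨v, hvw⟩ hv
        refine ⟨u.1, huS, ?_⟩
        rw [hGj]
        refine ⟨fun he => hadj.ne (Subtype.ext he), Or.inr (Or.inr ⟨u.2, hvw, ?_⟩)⟩
        convert hadj using 1
  have hchar : ∀ D : Set V, IsMinDominating Gj D ↔
      (D = {w} ∨ (w ∉ D ∧ D.ncard = 2)) := by
    intro D
    constructor
    · rintro ⟨hdom, hmin⟩
      by_cases hwD : w ∈ D
      · left
        by_contra hne'
        have hss : ({w} : Set V) ⊂ D :=
          ⟨Set.singleton_subset_iff.2 hwD, fun hc => hne' (Set.Subset.antisymm hc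
            (Set.singleton_subset_iff.2 hwD))⟩
        exact hmin {w} hss (hwdom {w} rfl)
      · right
        have hDne : D.Nonempty := by
          rcases D.eq_empty_or_nonempty with h | h
          · exact absurd (h ▸ hdom) hempty
          · exact h
        refine ⟨hwD, ?_⟩
        set S := Subtype.val ⁻¹' D with hSdef
        have hDS : Subtype.val '' S = D := himg D hwD
        have hSmin : IsMinDominating G' S := by
          constructor
          · exact (htrans D hwD hDne).1 hdom
          · intro S' hS' hdomS'
            rcases S'.eq_empty_or_nonempty with rfl | hS'ne
            · exact hemptyG' hdomS'
            · have hw' : w ∉ Subtype.val '' S' := by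
                rintro ⟨x, -, hxw⟩; exact x.2 hxw
              have hsub : Subtype.val '' S' ⊂ D := by
                rw [← hDS]
                refine ⟨Set.image_mono hS'.1, fun hc => hS'.2 ?_⟩
                intro x hx
                obtain ⟨y, hy, hyx⟩ := hc ⟨x, hx, rfl⟩
                exact (Subtype.val_injective hyx) ▸ hy
              have hD'ne : (Subtype.val '' S').Nonempty := hS'ne.image _
              apply hmin _ hsub
              rw [htrans _ hw' hD'ne, Set.preimage_image_eq _ Subtype.val_injective]
              exact hdomS'
        have hS2 : S.ncard = 2 := by
          have hm : S ∈ {D | IsMinDominating G' D} := hSmin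
          rw [hG'] at hm
          exact hm
        rw [← hDS, Set.ncard_image_of_injective S Subtype.val_injective]
        exact hS2
    · rintro (rfl | ⟨hwD, h2⟩)
      · refine ⟨hwdom _ rfl, ?_⟩
        intro D' hD'
        have : D' = ∅ := by
          rcases (Set.subset_singleton_iff_eq).1 hD'.1 with h | h
          · exact h
          · exact absurd h (fun h => hD'.2 (h ▸ le_refl _))
        rw [this]
        exact hempty
      · have hDne : D.Nonempty := Set.nonempty_of_ncard_ne_zero (by omega)
        set S := Subtype.val ⁻¹' D with hSdef
        have hDS : Subtype.val '' S = D := himg D hwD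
        have hS2 : S.ncard = 2 := by
          rw [← Set.ncard_image_of_injective S Subtype.val_injective, hDS]
          exact h2
        have hSmin : IsMinDominating G' S := by
          have hm : S ∈ {A : Set {x : V // x ≠ w} | A.ncard = 2} := hS2
          rw [← hG'] at hm
          exact hm
        refine ⟨(htrans D hwD hDne).2 hSmin.1, ?_⟩
        intro D' hD' hdomD'
        have hwD' : w ∉ D' := fun h => hwD (hD'.1 h)
        rcases D'.eq_empty_or_nonempty with rfl | hD'ne
        · exact hempty hdomD'
        · have hD'S : Subtype.val '' (Subtype.val ⁻¹' D') = D' := himg D' hwD'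
          have hS'sub : (Subtype.val ⁻¹' D') ⊂ S := by
            refine ⟨Set.preimage_mono hD'.1, fun hc => hD'.2 ?_⟩
            intro x hx
            have hxS : (⟨x, fun h => hwD (h ▸ hx)⟩ : {x : V // x ≠ w}) ∈ S := hx
            have := hc hxS
            exact this
          exact hSmin.2 _ hS'sub ((htrans D' hwD' hD'ne).1 hdomD')
  have hmain : {D : Set V | IsMinDominating Gj D}
      = {({w} : Set V)} ∪ {A : Set V | w ∉ A ∧ A.ncard = 2} := by
    ext D
    simp only [Set.mem_setOf_eq, Set.mem_union, Set.mem_singleton_iff]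
    exact hchar D
  exact ⟨hmain, Gj, hmain⟩
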